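/- For the partition function factorization: with the spin decomposition of the 2D polymer into two independent 1D Ising systems, the polymer partition function satisfies ℤ_N^β(h) = Z_{Λ_N}^{β/2}(h₁) · Z_{Λ_N}^{β/2}(h₂), where ℤ_N^β(h) = ∑_{S∈𝕎_N} exp(-βℍ_N(S)), Z_{Λ_N}^{β}(k) = ∑_{σ∈{-1,1}^N} exp(-βH_{Λ_N}(σ)) with field k, h₁ = ⟨h,e₁-e₂⟩, h₂ = ⟨h,e₁+e₂⟩. -/

import Mathlib

open Finset Real

noncomputable section

/-- The spin value `±1` associated to a Boolean. -/
def spin (b : Bool) : ℝ := if b then 1 else -1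

/-- The set of ordered pairs `i < j` of sites in `Λ_N = {1, …, N}`. -/
def pairs (N : ℕ) : Finset (Fin N × Fin N) :=
  Finset.univ.filter (fun p => p.1 < p.2)

/-- Ising Hamiltonian on `Λ_N` with free boundary conditions, coupling matrix
`J` and external field `k`: `H(σ) = -∑_{i<j} J_{ij} σ_i σ_j - k ∑_i σ_i`. -/
def isingH (N : ℕ) (J : Fin N → Fin N → ℝ) (k : ℝ) (σ : Fin N → Bool) : ℝ :=
  -(∑ p ∈ pairs N, J p.1 p.2 * spin (σ p.1) * spin (σ p.2)) -
    k * ∑ i, spin (σ i)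

/-- Ising partition function at inverse temperature `β`. -/
def isingZ (N : ℕ) (J : Fin N → Fin N → ℝ) (β k : ℝ) : ℝ :=
  ∑ σ : Fin N → Bool, exp (-β * isingH N J k σ)

/-- Ising Gibbs probability of a configuration `σ`. -/
def isingP (N : ℕ) (J : Fin N → Fin N → ℝ) (β k : ℝ) (σ : Fin N → Bool) : ℝ :=
  exp (-β * isingH N J k σ) / isingZ N J β k

/-- Two-point function `⟨σ_i σ_j⟩` of the Ising Gibbs measure. -/
def isingCorr (N : ℕ) (J : Fin N → Fin N → ℝ) (β k : ℝ) (i j : Fin N) : ℝ :=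
  ∑ σ : Fin N → Bool, spin (σ i) * spin (σ j) * isingP N J β k σ

/-- Magnetization `⟨σ_i⟩` of the Ising Gibbs measure. -/
def isingMag (N : ℕ) (J : Fin N → Fin N → ℝ) (β k : ℝ) (i : Fin N) : ℝ :=
  ∑ σ : Fin N → Bool, spin (σ i) * isingP N J β k σ

/-- The unit step of `ℤ²` associated (via the rotated-frame spin decomposition)
to a pair of spins. Each of the four spin pairs corresponds to one of the four
unit steps `±e₁, ±e₂`. -/
def stepOf : Bool × Bool → ℤ × ℤ
  | (true, true) => (-1, 0)
  | (true, false) => (0, 1)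
  | (false, true) => (0, -1)
  | (false, false) => (1, 0)

/-- Polymer Hamiltonian on `N`-step walks with increments `X`:
`ℍ_N(S) = -∑_{1≤i<j≤N} V_{ij} ⟨X_i, X_j⟩ + ⟨h, S_N⟩`, where `S_N = ∑_i X_i`. -/
def polyH (N : ℕ) (V : Fin N → Fin N → ℝ) (h : ℝ × ℝ) (X : Fin N → ℤ × ℤ) : ℝ :=
  -(∑ p ∈ pairs N, V p.1 p.2 *
      (((X p.1).1 * (X p.2).1 + (X p.1).2 * (X p.2).2 : ℤ) : ℝ)) +
    (h.1 * ((∑ i, (X i).1 : ℤ) : ℝ) + h.2 * ((∑ i, (X i).2 : ℤ) : ℝ))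

/-- Polymer partition function `ℤ_N^β(h)`; walks in `𝕎_N` are enumerated by
their spin pairs via the bijection `X_i ↔ (σ_i, σ̃_i)`. -/
def polyZ (N : ℕ) (V : Fin N → Fin N → ℝ) (β : ℝ) (h : ℝ × ℝ) : ℝ :=
  ∑ c : Fin N → Bool × Bool, exp (-β * polyH N V h (fun i => stepOf (c i)))

/-- The polymer Gibbs probability `ℙ_N^{β,h}` of a walk (encoded by spins). -/
def polyP (N : ℕ) (V : Fin N → Fin N → ℝ) (β : ℝ) (h : ℝ × ℝ)
    (c : Fin N → Bool × Bool) : ℝ :=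
  exp (-β * polyH N V h (fun i => stepOf (c i))) / polyZ N V β h

lemma stepOf_fst (p : Bool × Bool) :
    ((stepOf p).1 : ℝ) = -(spin p.1 + spin p.2) / 2 := by
  rcases p with ⟨_ | _, _ | _⟩ <;> simp [stepOf, spin] <;> norm_num

lemma stepOf_snd (p : Bool × Bool) :
    ((stepOf p).2 : ℝ) = (spin p.1 - spin p.2) / 2 := by
  rcases p with ⟨_ | _, _ | _⟩ <;> simp [stepOf, spin] <;> norm_num

lemma stepOf_inner (p q : Bool × Bool) :
    (((stepOf p).1 * (stepOf q).1 + (stepOf p).2 * (stepOf q).2 : ℤ) : ℝ) =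
      (spin p.1 * spin q.1 + spin p.2 * spin q.2) / 2 := by
  push_cast
  rw [stepOf_fst p, stepOf_fst q, stepOf_snd p, stepOf_snd q]
  rcases p with ⟨_ | _, _ | _⟩ <;> rcases q with ⟨_ | _, _ | _⟩ <;>
    simp [spin] <;> norm_num

lemma weight_split (N : ℕ) (V : Fin N → Fin N → ℝ) (β : ℝ) (h : ℝ × ℝ)
    (c : Fin N → Bool × Bool) :
    exp (-β * polyH N V h (fun i => stepOf (c i))) =
      exp (-(β / 2) * isingH N V (h.1 - h.2) (fun i => (c i).1)) *
      exp (-(β / 2) * isingH N V (h.1 + h.2) (fun i => (c i).2)) := by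
  rw [← Real.exp_add]
  congr 1
  have hpair : ∑ p ∈ pairs N, V p.1 p.2 *
      ((((stepOf (c p.1)).1 * (stepOf (c p.2)).1 +
        (stepOf (c p.1)).2 * (stepOf (c p.2)).2 : ℤ)) : ℝ) =
      ((∑ p ∈ pairs N, V p.1 p.2 * spin ((c p.1).1) * spin ((c p.2).1)) +
       (∑ p ∈ pairs N, V p.1 p.2 * spin ((c p.1).2) * spin ((c p.2).2))) / 2 := by
    rw [← Finset.sum_add_distrib, Finset.sum_div]
    refine Finset.sum_congr rfl fun p _ => ?_
    rw [stepOf_inner]; ring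
  have h1 : ((∑ i, (stepOf (c i)).1 : ℤ) : ℝ) =
      -((∑ i, spin ((c i).1)) + (∑ i, spin ((c i).2))) / 2 := by
    push_cast
    rw [← Finset.sum_add_distrib, ← Finset.sum_neg_distrib, Finset.sum_div]
    exact Finset.sum_congr rfl fun i _ => by rw [stepOf_fst]; try ring
  have h2 : ((∑ i, (stepOf (c i)).2 : ℤ) : ℝ) =
      ((∑ i, spin ((c i).1)) - (∑ i, spin ((c i).2))) / 2 := by
    push_cast
    rw [← Finset.sum_sub_distrib, Finset.sum_div]
    exact Finset.sum_congr rfl fun i _ => by rw [stepOf_snd]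
  simp only [polyH, isingH, hpair, h1, h2]
  ring

/-- Partition function factorization. Under the spin
decomposition of the 2D polymer into two independent 1D Ising systems,
`ℤ_N^β(h) = Z_{Λ_N}^{β/2}(h₁) · Z_{Λ_N}^{β/2}(h₂)` with `h₁ = ⟨h, e₁-e₂⟩` and
`h₂ = ⟨h, e₁+e₂⟩`. -/
theorem partition_function_factorization (N : ℕ) (V : Fin N → Fin N → ℝ)
    (β : ℝ) (hβ : 0 < β) (h : ℝ × ℝ) :
    polyZ N V β h =
      isingZ N V (β / 2) (h.1 - h.2) * isingZ N V (β / 2) (h.1 + h.2) := by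
  rw [polyZ, isingZ, isingZ, Finset.sum_mul_sum]
  rw [← Fintype.sum_prod_type']
  rw [← Equiv.sum_comp (Equiv.arrowProdEquivProdArrow (Fin N) (fun _ => Bool) (fun _ => Bool))]
  refine Finset.sum_congr rfl fun c _ => ?_
  rw [weight_split]
  rfl

end
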